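/- The maximum aggregation function max : [0,1]^{<ω} → [0,1] is not strongly admissible: there exist two convergence testing sequences r̄_n and ρ̄_n with the same parameters (c₁,c₂) = (0,1), (α₁,α₂) = (1,0) such that |max(r̄_n) − max(ρ̄_n)| = 1 for all n. Concretely one may take r̄_n = (0,…,0) of length n+1 and ρ̄_n = (0,…,0,1) of length n+1. -/
import Mathlib


open Filter

open Classical in
noncomputable def countIn (l : List ℝ) (S : Set ℝ) : ℝ :=
  (l.map (fun x => if x ∈ S then (1:ℝ) else 0)).sum

def IsOpenInterval01 (S : Set ℝ) : Prop :=
  S ⊆ Set.Icc 0 1 ∧ S.OrdConnected ∧ ∃ U : Set ℝ, IsOpen U ∧ S = U ∩ Set.Icc 0 1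

def ConvergenceTesting (r : ℕ → List ℝ) (k : ℕ) (c α : Fin k → ℝ) : Prop :=
  (∀ n, r n ≠ [] ∧ ∀ x ∈ r n, x ∈ Set.Icc (0:ℝ) 1) ∧
  (∀ n, (r n).length < (r (n+1)).length) ∧
  ∀ I : Fin k → Set ℝ,
    (∀ j, IsOpenInterval01 (I j)) →
    (Pairwise fun i j => Disjoint (I i) (I j)) →
    (∀ j, c j ∈ I j) →
    (∃ N : ℕ, ∀ n ≥ N, ∀ x ∈ r n, x ∈ ⋃ j, I j) ∧
    ∀ j, Tendsto (fun n => countIn (r n) (I j) / (r n).length) atTop (nhds (α j))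

/-- The maximum aggregation function on finite sequences in `[0,1]`. -/
def maxAgg (l : List ℝ) : ℝ := l.foldr max 0

lemma countIn_replicate_mem (n : ℕ) (a : ℝ) (S : Set ℝ) (h : a ∈ S) :
    countIn (List.replicate n a) S = (n:ℝ) := by
  simp [countIn, List.map_replicate, List.sum_replicate, h]

lemma countIn_replicate_not_mem (n : ℕ) (a : ℝ) (S : Set ℝ) (h : a ∉ S) :
    countIn (List.replicate n a) S = 0 := by
  simp [countIn, List.map_replicate, List.sum_replicate, h]

lemma countIn_append (l l' : List ℝ) (S : Set ℝ) :
    countIn (l ++ l') S = countIn l S + countIn l' S := by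
  simp [countIn]

lemma maxAgg_replicate_zero (n : ℕ) : maxAgg (List.replicate n (0:ℝ)) = 0 := by
  induction n with
  | zero => simp [maxAgg]
  | succ m ih =>
    rw [List.replicate_succ]
    simp only [maxAgg, List.foldr_cons] at ih ⊢
    rw [ih]; norm_num

lemma maxAgg_rho (n : ℕ) : maxAgg (List.replicate n (0:ℝ) ++ [1]) = 1 := by
  induction n with
  | zero => simp [maxAgg]
  | succ m ih =>
    rw [List.replicate_succ, List.cons_append]
    simp only [maxAgg, List.foldr_cons] at ih ⊢
    rw [ih]; norm_num

/-- The maximum aggregation function is not strongly admissible: there are two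
convergence testing sequences with the same parameters `(c₁,c₂) = (0,1)`,
`(α₁,α₂) = (1,0)` — concretely `r̄_n = (0,…,0)` of length `n+1` and
`ρ̄_n = (0,…,0,1)` of length `n+1` — on which the values of `max` differ by `1`
for every `n`. -/
theorem max_not_strongly_admissible :
    ∃ r ρ : ℕ → List ℝ,
      (∀ n, r n = List.replicate (n + 1) (0:ℝ)) ∧
      (∀ n, ρ n = List.replicate n (0:ℝ) ++ [1]) ∧
      ConvergenceTesting r 2 ![0, 1] ![1, 0] ∧
      ConvergenceTesting ρ 2 ![0, 1] ![1, 0] ∧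
      ∀ n, |maxAgg (r n) - maxAgg (ρ n)| = 1 := by
  classical
  refine ⟨fun n => List.replicate (n + 1) (0:ℝ),
      fun n => List.replicate n (0:ℝ) ++ [1],
      fun _ => rfl, fun _ => rfl, ?_, ?_, ?_⟩
  · refine ⟨fun n => ⟨by simp, fun x hx => ?_⟩, fun n => by simp, fun I hI hdis hc => ?_⟩
    · rw [List.eq_of_mem_replicate hx]; exact ⟨le_refl 0, by norm_num⟩
    · have h0 : (0:ℝ) ∈ I 0 := by simpa using hc 0
      have h1 : (1:ℝ) ∈ I 1 := by simpa using hc 1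
      have h01 : (0:ℝ) ∉ I 1 := fun h => (hdis (show (0:Fin 2) ≠ 1 by decide)).ne_of_mem h0 h rfl
      constructor
      · refine ⟨0, fun n _ x hx => ?_⟩
        rw [List.eq_of_mem_replicate hx]
        exact Set.mem_iUnion.2 ⟨0, h0⟩
      · intro j
        fin_cases j
        · have heq : ∀ n : ℕ, countIn (List.replicate (n+1) (0:ℝ)) (I 0) /
              (List.replicate (n+1) (0:ℝ)).length = 1 := by
            intro n
            rw [countIn_replicate_mem _ _ _ h0, List.length_replicate]
            rw [div_self (by positivity)]
          simp only [Fin.isValue, Fin.zero_eta, Matrix.cons_val_zero]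
          simp only [heq]
          exact tendsto_const_nhds
        · have heq : ∀ n : ℕ, countIn (List.replicate (n+1) (0:ℝ)) (I 1) /
              (List.replicate (n+1) (0:ℝ)).length = 0 := by
            intro n
            rw [countIn_replicate_not_mem _ _ _ h01]
            simp
          simp only [Fin.isValue, Fin.mk_one, Matrix.cons_val_one, Matrix.head_cons]
          simp only [heq]
          exact tendsto_const_nhds
  · refine ⟨fun n => ⟨by simp, fun x hx => ?_⟩, fun n => by simp, fun I hI hdis hc => ?_⟩
    · rcases List.mem_append.1 hx with h | h
      · rw [List.eq_of_mem_replicate h]; exact ⟨le_refl 0, by norm_num⟩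
      · simp at h; rw [h]; exact ⟨by norm_num, le_refl 1⟩
    · have h0 : (0:ℝ) ∈ I 0 := by simpa using hc 0
      have h1 : (1:ℝ) ∈ I 1 := by simpa using hc 1
      have h01 : (0:ℝ) ∉ I 1 := fun h => (hdis (show (0:Fin 2) ≠ 1 by decide)).ne_of_mem h0 h rfl
      have h10 : (1:ℝ) ∉ I 0 := fun h => (hdis (show (0:Fin 2) ≠ 1 by decide)).ne_of_mem h h1 rfl
      constructor
      · refine ⟨0, fun n _ x hx => ?_⟩
        rcases List.mem_append.1 hx with h | h
        · rw [List.eq_of_mem_replicate h]; exact Set.mem_iUnion.2 ⟨0, h0⟩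
        · simp at h; rw [h]; exact Set.mem_iUnion.2 ⟨1, h1⟩
      · intro j
        fin_cases j
        · have heq : ∀ n : ℕ, countIn (List.replicate n (0:ℝ) ++ [1]) (I 0) /
              ((List.replicate n (0:ℝ) ++ [1]).length : ℝ) = (n:ℝ) / (n + 1) := by
            intro n
            rw [countIn_append, countIn_replicate_mem _ _ _ h0]
            simp [countIn, h10]
          simp only [Fin.isValue, Fin.zero_eta, Matrix.cons_val_zero]
          simp only [heq]
          exact tendsto_natCast_div_add_atTop (𝕜 := ℝ) 1
        · have heq : ∀ n : ℕ, countIn (List.replicate n (0:ℝ) ++ [1]) (I 1) /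
              ((List.replicate n (0:ℝ) ++ [1]).length : ℝ) = 1 / ((n:ℝ) + 1) := by
            intro n
            rw [countIn_append, countIn_replicate_not_mem _ _ _ h01]
            simp [countIn, h1]
          simp only [Fin.isValue, Fin.mk_one, Matrix.cons_val_one, Matrix.head_cons]
          simp only [heq]
          exact tendsto_one_div_add_atTop_nhds_zero_nat
  · intro n
    rw [maxAgg_replicate_zero, maxAgg_rho]; norm_num
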